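/- Let τ = (1+√5)/2 and σ = (1−√5)/2. The subgroup of the group of units of the real quaternions generated by the two elements g = (−1+i+j+k)/2 and h = (i − σj − τk)/2 has exactly 12 elements. -/

import Mathlib

open Quaternion

/-- The standard quaternion unit `i`. -/
noncomputable def quatI : ℍ[ℝ] := ⟨0, 1, 0, 0⟩

/-- The standard quaternion unit `j`. -/
noncomputable def quatJ : ℍ[ℝ] := ⟨0, 0, 1, 0⟩

/-- The standard quaternion unit `k`. -/
noncomputable def quatK : ℍ[ℝ] := ⟨0, 0, 0, 1⟩

lemma quat_two_re : (2 : ℍ[ℝ]).re = 2 := rfl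
lemma quat_two_imI : (2 : ℍ[ℝ]).imI = 0 := rfl
lemma quat_two_imJ : (2 : ℍ[ℝ]).imJ = 0 := rfl
lemma quat_two_imK : (2 : ℍ[ℝ]).imK = 0 := rfl


lemma qI1 : quatI.re = 0 := rfl
lemma qI2 : quatI.imI = 1 := rfl
lemma qI3 : quatI.imJ = 0 := rfl
lemma qI4 : quatI.imK = 0 := rfl
lemma qJ1 : quatJ.re = 0 := rfl
lemma qJ2 : quatJ.imI = 0 := rfl
lemma qJ3 : quatJ.imJ = 1 := rfl
lemma qJ4 : quatJ.imK = 0 := rfl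
lemma qK1 : quatK.re = 0 := rfl
lemma qK2 : quatK.imI = 0 := rfl
lemma qK3 : quatK.imJ = 0 := rfl
lemma qK4 : quatK.imK = 1 := rfl

lemma quat_two_ne : (2 : ℍ[ℝ]) ≠ 0 := by
  intro hq
  have := congrArg QuaternionAlgebra.re hq
  rw [quat_two_re, Quaternion.re_zero] at this
  norm_num at this

lemma hval (τ σ : ℝ) :
    (quatI - σ • quatJ - τ • quatK) / 2 = (⟨0, 1/2, -σ/2, -τ/2⟩ : ℍ[ℝ]) := by
  refine (div_eq_iff quat_two_ne).mpr ?_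
  ext
  · simp [qI1,qI2,qI3,qI4,qJ1,qJ2,qJ3,qJ4,qK1,qK2,qK3,qK4]
    erw [Quaternion.re_mul]
    norm_num [quat_two_re, quat_two_imI, quat_two_imJ, quat_two_imK]
  · simp [qI1,qI2,qI3,qI4,qJ1,qJ2,qJ3,qJ4,qK1,qK2,qK3,qK4]
    erw [Quaternion.imI_mul]
    norm_num [quat_two_re, quat_two_imI, quat_two_imJ, quat_two_imK]
  · simp [qI1,qI2,qI3,qI4,qJ1,qJ2,qJ3,qJ4,qK1,qK2,qK3,qK4]
    erw [Quaternion.imJ_mul]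
    norm_num [quat_two_re, quat_two_imI, quat_two_imJ, quat_two_imK]
  · simp [qI1,qI2,qI3,qI4,qJ1,qJ2,qJ3,qJ4,qK1,qK2,qK3,qK4]
    erw [Quaternion.imK_mul]
    norm_num [quat_two_re, quat_two_imI, quat_two_imJ, quat_two_imK]

lemma gval : (-1 + quatI + quatJ + quatK) / 2 = (⟨-(1/2), 1/2, 1/2, 1/2⟩ : ℍ[ℝ]) := by
  refine (div_eq_iff quat_two_ne).mpr ?_
  ext
  · simp [qI1,qI2,qI3,qI4,qJ1,qJ2,qJ3,qJ4,qK1,qK2,qK3,qK4]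
    erw [Quaternion.re_mul]
    norm_num [quat_two_re, quat_two_imI, quat_two_imJ, quat_two_imK]
  · simp [qI1,qI2,qI3,qI4,qJ1,qJ2,qJ3,qJ4,qK1,qK2,qK3,qK4]
    erw [Quaternion.imI_mul]
    norm_num [quat_two_re, quat_two_imI, quat_two_imJ, quat_two_imK]
  · simp [qI1,qI2,qI3,qI4,qJ1,qJ2,qJ3,qJ4,qK1,qK2,qK3,qK4]
    erw [Quaternion.imJ_mul]
    norm_num [quat_two_re, quat_two_imI, quat_two_imJ, quat_two_imK]
  · simp [qI1,qI2,qI3,qI4,qJ1,qJ2,qJ3,qJ4,qK1,qK2,qK3,qK4]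
    erw [Quaternion.imK_mul]
    norm_num [quat_two_re, quat_two_imI, quat_two_imJ, quat_two_imK]

lemma hsq (τ σ : ℝ)
    (hτ : τ = (1 + Real.sqrt 5) / 2) (hσ : σ = (1 - Real.sqrt 5) / 2) :
    (⟨0, 1/2, -σ/2, -τ/2⟩ : ℍ[ℝ]) * ⟨0, 1/2, -σ/2, -τ/2⟩ = -1 := by
  have s5 : Real.sqrt 5 ^ 2 = 5 := Real.sq_sqrt (by norm_num)
  subst hτ hσ
  ext <;> simp [Quaternion.re_mul, Quaternion.imI_mul, Quaternion.imJ_mul,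
    Quaternion.imK_mul] <;> nlinarith [s5]

lemma gcube :
    (⟨-(1/2), 1/2, 1/2, 1/2⟩ : ℍ[ℝ]) * ⟨-(1/2), 1/2, 1/2, 1/2⟩ * ⟨-(1/2), 1/2, 1/2, 1/2⟩
      = 1 := by
  ext <;> simp [Quaternion.re_mul, Quaternion.imI_mul, Quaternion.imJ_mul,
    Quaternion.imK_mul] <;> norm_num

lemma hgswap (τ σ : ℝ)
    (hτ : τ = (1 + Real.sqrt 5) / 2) (hσ : σ = (1 - Real.sqrt 5) / 2) :
    (⟨0, 1/2, -σ/2, -τ/2⟩ : ℍ[ℝ]) * ⟨-(1/2), 1/2, 1/2, 1/2⟩ =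
    (⟨-(1/2), 1/2, 1/2, 1/2⟩ : ℍ[ℝ]) * ((⟨-(1/2), 1/2, 1/2, 1/2⟩ : ℍ[ℝ]) *
      ⟨0, 1/2, -σ/2, -τ/2⟩) := by
  have s5 : Real.sqrt 5 ^ 2 = 5 := Real.sq_sqrt (by norm_num)
  subst hτ hσ
  ext <;> simp [Quaternion.re_mul, Quaternion.imI_mul, Quaternion.imJ_mul,
    Quaternion.imK_mul] <;> nlinarith [s5]

/-- With `τ = (1+√5)/2`, `σ = (1−√5)/2`, the subgroup of `ℍˣ` generated by
`g = (−1+i+j+k)/2` and `h = (i − σj − τk)/2` has exactly 12 elements. -/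
theorem dicyclic_subgroup_order_12 (τ σ : ℝ)
    (hτ : τ = (1 + Real.sqrt 5) / 2) (hσ : σ = (1 - Real.sqrt 5) / 2)
    (g h : ℍ[ℝ]ˣ)
    (hg : (g : ℍ[ℝ]) = (-1 + quatI + quatJ + quatK) / 2)
    (hh : (h : ℍ[ℝ]) = (quatI - σ • quatJ - τ • quatK) / 2) :
    Nat.card (Subgroup.closure ({g, h} : Set ℍ[ℝ]ˣ)) = 12 := by
  have hg' : (g : ℍ[ℝ]) = ⟨-(1/2), 1/2, 1/2, 1/2⟩ := by rw [hg, gval]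
  have hh' : (h : ℍ[ℝ]) = ⟨0, 1/2, -σ/2, -τ/2⟩ := by rw [hh, hval]
  -- key relations
  have hg3 : g ^ 3 = 1 := by
    apply Units.ext
    rw [Units.val_pow_eq_pow_val, Units.val_one, hg']
    erw [pow_succ, pow_two, gcube]
    rfl
  have hh2 : h ^ 2 = -1 := by
    apply Units.ext
    rw [Units.val_pow_eq_pow_val, pow_two, hh']
    erw [hsq τ σ hτ hσ]
    simp
    rfl
  have hswap : h * g = g * (g * h) := by
    apply Units.ext
    simp only [Units.val_mul, hg', hh']
    exact hgswap τ σ hτ hσ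
  have hh4 : h ^ 4 = 1 := by
    rw [show (4:ℕ) = 2*2 from rfl, pow_mul, hh2]; simp
  -- swapping powers
  have key1 : ∀ c : ℕ, h * g ^ c = g ^ (2 * c) * h := by
    intro c
    induction c with
    | zero => simp
    | succ n ih =>
      rw [pow_succ, ← mul_assoc, ih, mul_assoc, hswap]
      rw [show 2 * (n + 1) = 2 * n + 1 + 1 by ring, pow_succ, pow_succ]
      group
  have key2 : ∀ b c : ℕ, h ^ b * g ^ c = g ^ (2 ^ b * c) * h ^ b := by
    intro b
    induction b with
    | zero => simp
    | succ n ih =>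
      intro c
      rw [pow_succ, mul_assoc, key1 c, ← mul_assoc, ih (2 * c), mul_assoc,
        ← pow_succ]
      ring_nf
  -- every element of the closure is of the form g^a * h^b
  have hform : ∀ x ∈ Subgroup.closure ({g, h} : Set ℍ[ℝ]ˣ),
      ∃ a b : ℕ, x = g ^ a * h ^ b := by
    intro x hx
    induction hx using Subgroup.closure_induction with
    | mem y hy =>
      simp only [Set.mem_insert_iff, Set.mem_singleton_iff] at hy
      rcases hy with rfl | rfl
      · exact ⟨1, 0, by simp⟩
      · exact ⟨0, 1, by simp⟩
    | one => exact ⟨0, 0, by simp⟩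
    | mul y z _ _ hy hz =>
      obtain ⟨a, b, rfl⟩ := hy
      obtain ⟨c, d, rfl⟩ := hz
      refine ⟨a + 2 ^ b * c, b + d, ?_⟩
      rw [mul_assoc, ← mul_assoc (h ^ b), key2 b c, pow_add, pow_add]
      group
    | inv y _ hy =>
      obtain ⟨a, b, rfl⟩ := hy
      have hginv : g⁻¹ = g ^ 2 := by
        apply inv_eq_of_mul_eq_one_right
        rw [← pow_succ']; exact hg3
      have hhinv : h⁻¹ = h ^ 3 := by
        apply inv_eq_of_mul_eq_one_right
        rw [← pow_succ']; exact hh4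
      refine ⟨2 ^ (3 * b) * (2 * a), 3 * b, ?_⟩
      rw [mul_inv_rev, ← inv_pow, ← inv_pow, hginv, hhinv, ← pow_mul, ← pow_mul,
        key2 (3 * b) (2 * a)]
  -- reduction of exponents
  have powg : ∀ a : ℕ, g ^ a = g ^ (a % 3) := by
    intro a
    conv_lhs => rw [← Nat.div_add_mod a 3]
    rw [pow_add, pow_mul, hg3, one_pow, one_mul]
  have powh : ∀ b : ℕ, h ^ b = h ^ (b % 4) := by
    intro b
    conv_lhs => rw [← Nat.div_add_mod b 4]
    rw [pow_add, pow_mul, hh4, one_pow, one_mul]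
  set f : Fin 3 × Fin 4 → ℍ[ℝ]ˣ := fun p => g ^ (p.1 : ℕ) * h ^ (p.2 : ℕ) with hf
  have hsub : (Subgroup.closure ({g, h} : Set ℍ[ℝ]ˣ) : Set ℍ[ℝ]ˣ) ⊆ Set.range f := by
    intro x hx
    obtain ⟨a, b, rfl⟩ := hform x hx
    exact ⟨(⟨a % 3, Nat.mod_lt _ (by norm_num)⟩, ⟨b % 4, Nat.mod_lt _ (by norm_num)⟩),
      by simp only [hf]; rw [← powg, ← powh]⟩
  -- cardinality bounds
  have hle : Nat.card (Subgroup.closure ({g, h} : Set ℍ[ℝ]ˣ)) ≤ 12 := by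
    calc Nat.card (Subgroup.closure ({g, h} : Set ℍ[ℝ]ˣ))
        ≤ Nat.card (Set.range f) := Nat.card_mono (Set.finite_range f) hsub
      _ ≤ Nat.card (Fin 3 × Fin 4) := Finite.card_range_le f
      _ = 12 := by simp [Nat.card_eq_fintype_card]
  haveI : Finite (Subgroup.closure ({g, h} : Set ℍ[ℝ]ˣ)) :=
    ((Set.finite_range f).subset hsub).to_subtype
  have hpos : 0 < Nat.card (Subgroup.closure ({g, h} : Set ℍ[ℝ]ˣ)) := Nat.card_pos
  -- orders of g and h
  have gne : g ≠ 1 := by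
    intro e
    rw [e, Units.val_one] at hg'
    have := congrArg QuaternionAlgebra.re hg'
    rw [Quaternion.re_one] at this
    norm_num at this
  have ordg : orderOf g = 3 := by
    haveI : Fact (Nat.Prime 3) := ⟨by norm_num⟩
    exact orderOf_eq_prime hg3 gne
  have h2ne : ¬ h ^ 2 ^ 1 = 1 := by
    rw [pow_one, hh2]
    intro e
    have := congrArg (fun u : ℍ[ℝ]ˣ => (u : ℍ[ℝ]).re) e
    simp [Quaternion.re_one] at this
    norm_num at this
  have ordh : orderOf h = 4 := by
    haveI : Fact (Nat.Prime 2) := ⟨by norm_num⟩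
    have := orderOf_eq_prime_pow (x := h) (p := 2) (n := 1) h2ne (by norm_num [hh4])
    simpa using this
  have hgd : 3 ∣ Nat.card (Subgroup.closure ({g, h} : Set ℍ[ℝ]ˣ)) := by
    rw [← ordg]
    exact Subgroup.orderOf_dvd_natCard _ (Subgroup.subset_closure (by simp))
  have hhd : 4 ∣ Nat.card (Subgroup.closure ({g, h} : Set ℍ[ℝ]ˣ)) := by
    rw [← ordh]
    exact Subgroup.orderOf_dvd_natCard _ (Subgroup.subset_closure (by simp))
  have h12 : 12 ∣ Nat.card (Subgroup.closure ({g, h} : Set ℍ[ℝ]ˣ)) :=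
    (Nat.Coprime.mul_dvd_of_dvd_of_dvd (by norm_num) hgd hhd)
  exact le_antisymm hle (Nat.le_of_dvd hpos h12)
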